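/- Let x be a vector of n positive reals and e_k the k-th elementary symmetric polynomial with e₀ = 1. Then for 0 ≤ k ≤ n−1, defining D_k(x) := e₁(x) − (k+1)e_{k+1}(x)/e_k(x), one has D_k(x) < D_{k+1}(x). -/

import Mathlib

open BigOperators

/-- The elementary symmetric polynomial of degree `k` in the entries of `x`. -/
noncomputable def esym {n : ℕ} (k : ℕ) (x : Fin n → ℝ) : ℝ :=
  ∑ S ∈ Finset.univ.powersetCard k, ∏ i ∈ S, x i

section Aux

variable {ι : Type*} [DecidableEq ι]

/-- Elementary symmetric function over a finset. -/
noncomputable def Esym (s : Finset ι) (k : ℕ) (f : ι → ℝ) : ℝ :=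
  ∑ S ∈ s.powersetCard k, ∏ i ∈ S, f i

lemma Esym_zero (s : Finset ι) (f : ι → ℝ) : Esym s 0 f = 1 := by
  simp [Esym]

lemma Esym_insert {a : ι} {s : Finset ι} (ha : a ∉ s) (k : ℕ) (f : ι → ℝ) :
    Esym (insert a s) (k + 1) f = Esym s (k + 1) f + f a * Esym s k f := by
  classical
  have hdisj : Disjoint (s.powersetCard (k + 1))
      ((s.powersetCard k).image (insert a)) := by
    rw [Finset.disjoint_left]
    intro S hS hS'
    obtain ⟨T, hT, rfl⟩ := Finset.mem_image.1 hS'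
    exact ha ((Finset.mem_powersetCard.1 hS).1 (Finset.mem_insert_self a T))
  have hinj : ∀ T ∈ s.powersetCard k, ∀ U ∈ s.powersetCard k,
      insert a T = insert a U → T = U := by
    intro T hT U hU h
    have haT : a ∉ T := fun h' => ha ((Finset.mem_powersetCard.1 hT).1 h')
    have haU : a ∉ U := fun h' => ha ((Finset.mem_powersetCard.1 hU).1 h')
    rw [← Finset.erase_insert haT, h, Finset.erase_insert haU]
  rw [Esym, Finset.powersetCard_succ_insert ha, Finset.sum_union hdisj,
    Finset.sum_image hinj]
  rw [Esym, Esym, Finset.mul_sum]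
  congr 1
  refine Finset.sum_congr rfl fun T hT => ?_
  have haT : a ∉ T := fun h => ha ((Finset.mem_powersetCard.1 hT).1 h)
  rw [Finset.prod_insert haT]

lemma Esym_eq_zero {s : Finset ι} {k : ℕ} (h : s.card < k) (f : ι → ℝ) :
    Esym s k f = 0 := by
  simp [Esym, Finset.powersetCard_eq_empty.2 h]

lemma Esym_nonneg {s : Finset ι} {f : ι → ℝ} (hf : ∀ i ∈ s, 0 < f i) (k : ℕ) :
    0 ≤ Esym s k f := by
  refine Finset.sum_nonneg fun S hS => Finset.prod_nonneg fun i hi => ?_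
  exact (hf i ((Finset.mem_powersetCard.1 hS).1 hi)).le

lemma Esym_pos {s : Finset ι} {f : ι → ℝ} (hf : ∀ i ∈ s, 0 < f i) {k : ℕ}
    (hk : k ≤ s.card) : 0 < Esym s k f := by
  obtain ⟨T, hTs, hT⟩ := Finset.exists_subset_card_eq hk
  refine Finset.sum_pos' (fun S hS => Finset.prod_nonneg fun i hi =>
    (hf i ((Finset.mem_powersetCard.1 hS).1 hi)).le) ⟨T, ?_, ?_⟩
  · exact Finset.mem_powersetCard.2 ⟨hTs, hT⟩
  · exact Finset.prod_pos fun i hi => hf i (hTs hi)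

/-- Nonstrict Newton-type inequality. -/
lemma newton_nonneg (f : ι → ℝ) (s : Finset ι) (hf : ∀ i ∈ s, 0 < f i) (k : ℕ) :
    ((k : ℝ) + 2) * Esym s k f * Esym s (k + 2) f
      ≤ ((k : ℝ) + 1) * Esym s (k + 1) f ^ 2 := by
  classical
  induction s using Finset.induction_on generalizing k with
  | empty =>
    have h2 : Esym (∅ : Finset ι) (k + 2) f = 0 := Esym_eq_zero (by simp) f
    have h1 : Esym (∅ : Finset ι) (k + 1) f = 0 := Esym_eq_zero (by simp) f
    rw [h1, h2]
    simp
  | @insert a s ha ih =>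
    have hy : 0 < f a := hf a (Finset.mem_insert_self a s)
    have hfs : ∀ i ∈ s, 0 < f i := fun i hi => hf i (Finset.mem_insert_of_mem hi)
    match k with
    | 0 =>
      have h0 := ih hfs 0
      rw [Esym_zero] at h0 ⊢
      rw [show (2 : ℕ) = 1 + 1 from rfl, Esym_insert ha 1 f, Esym_insert ha 0 f,
        Esym_zero]
      push_cast at h0 ⊢
      nlinarith [sq_nonneg (f a), Esym_nonneg hfs 1, Esym_nonneg hfs 2]
    | (k' + 1) =>
      have e1 := Esym_insert ha k' f
      have e2 := Esym_insert ha (k' + 1) f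
      have e3 := Esym_insert ha (k' + 2) f
      have hT0 := ih hfs (k' + 1)
      have h2 := ih hfs k'
      have hAn := Esym_nonneg hfs (k' + 1)
      have hBn := Esym_nonneg hfs (k' + 2)
      have hCn := Esym_nonneg hfs (k' + 3)
      have hDn := Esym_nonneg hfs k'
      simp only [show k' + 1 + 1 = k' + 2 from rfl, show k' + 1 + 2 = k' + 3 from rfl,
        show k' + 2 + 1 = k' + 3 from rfl] at *
      rw [e1, e2, e3]
      push_cast at hT0 h2 ⊢
      set A := Esym s (k' + 1) f
      set B := Esym s (k' + 2) f
      set C := Esym s (k' + 3) f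
      set D := Esym s k' f
      set y := f a
      set K : ℝ := (k' : ℝ) with hK
      have hKn : (0 : ℝ) ≤ K := Nat.cast_nonneg k'
      -- hT0 : (K + 3) * A * C ≤ (K + 2) * B ^ 2  (up to ring normalization)
      have hT0' : (K + 3) * A * C ≤ (K + 2) * B ^ 2 := by linarith [hT0]
      have h2' : (K + 2) * D * B ≤ (K + 1) * A ^ 2 := by linarith [h2]
      have hT2 : (K + 3) * B * D ≤ (K + 2) * A ^ 2 := by
        nlinarith [mul_le_mul_of_nonneg_left h2' (by linarith : (0 : ℝ) ≤ K + 3),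
          sq_nonneg A, mul_nonneg hBn hDn]
      have hT1 : (K + 3) * C * D ≤ (K + 1) * A * B := by
        by_cases hc : s.card < k' + 3
        · have hC0 : C = 0 := Esym_eq_zero hc f
          rw [hC0]
          have : 0 ≤ (K + 1) * A * B := by positivity
          linarith
        · push_neg at hc
          have hApos : 0 < A := Esym_pos hfs (by omega)
          have hBpos : 0 < B := Esym_pos hfs (by omega)
          have hX : (0 : ℝ) < (K + 2) * (A * B) := by positivity
          have h3 := mul_le_mul hT0' h2' (by positivity) (by positivity)
          rw [← mul_le_mul_iff_of_pos_right hX]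
          calc (K + 3) * C * D * ((K + 2) * (A * B))
              = ((K + 3) * A * C) * ((K + 2) * D * B) := by ring
            _ ≤ ((K + 2) * B ^ 2) * ((K + 1) * A ^ 2) := h3
            _ = (K + 1) * A * B * ((K + 2) * (A * B)) := by ring
      nlinarith [hT0', mul_le_mul_of_nonneg_left hT1 hy.le,
        mul_le_mul_of_nonneg_left hT2 (sq_nonneg y)]

/-- Strict Newton-type inequality. -/
lemma newton_pos (f : ι → ℝ) (s : Finset ι) (hf : ∀ i ∈ s, 0 < f i) (k : ℕ)
    (hk : k + 2 ≤ s.card) :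
    ((k : ℝ) + 2) * Esym s k f * Esym s (k + 2) f
      < ((k : ℝ) + 1) * Esym s (k + 1) f ^ 2 := by
  classical
  induction s using Finset.induction_on generalizing k with
  | empty => simp at hk
  | @insert a s ha ih =>
    have hy : 0 < f a := hf a (Finset.mem_insert_self a s)
    have hfs : ∀ i ∈ s, 0 < f i := fun i hi => hf i (Finset.mem_insert_of_mem hi)
    rw [Finset.card_insert_of_notMem ha] at hk
    match k, hk with
    | 0, hk =>
      have h0 := newton_nonneg f s hfs 0
      rw [Esym_zero] at h0 ⊢
      rw [show (2 : ℕ) = 1 + 1 from rfl, Esym_insert ha 1 f, Esym_insert ha 0 f,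
        Esym_zero]
      push_cast at h0 ⊢
      nlinarith [mul_pos hy hy, Esym_nonneg hfs 1, Esym_nonneg hfs 2]
    | (k' + 1), hk =>
      have e1 := Esym_insert ha k' f
      have e2 := Esym_insert ha (k' + 1) f
      have e3 := Esym_insert ha (k' + 2) f
      have h2 := newton_nonneg f s hfs k'
      have hT0nn := newton_nonneg f s hfs (k' + 1)
      have hAn := Esym_nonneg hfs (k' + 1)
      have hBn := Esym_nonneg hfs (k' + 2)
      have hCn := Esym_nonneg hfs (k' + 3)
      have hDn := Esym_nonneg hfs k'
      simp only [show k' + 1 + 1 = k' + 2 from rfl, show k' + 1 + 2 = k' + 3 from rfl,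
        show k' + 2 + 1 = k' + 3 from rfl] at *
      rw [e1, e2, e3]
      push_cast at h2 hT0nn ⊢
      set A := Esym s (k' + 1) f
      set B := Esym s (k' + 2) f
      set C := Esym s (k' + 3) f
      set D := Esym s k' f
      set y := f a
      set K : ℝ := (k' : ℝ) with hK
      have hKn : (0 : ℝ) ≤ K := Nat.cast_nonneg k'
      have hT0nn' : (K + 3) * A * C ≤ (K + 2) * B ^ 2 := by linarith [hT0nn]
      have h2' : (K + 2) * D * B ≤ (K + 1) * A ^ 2 := by linarith [h2]
      have hT2 : (K + 3) * B * D ≤ (K + 2) * A ^ 2 := by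
        nlinarith [mul_le_mul_of_nonneg_left h2' (by linarith : (0 : ℝ) ≤ K + 3),
          sq_nonneg A, mul_nonneg hBn hDn]
      have hT1 : (K + 3) * C * D ≤ (K + 1) * A * B := by
        by_cases hc : s.card < k' + 3
        · have hC0 : C = 0 := Esym_eq_zero hc f
          rw [hC0]
          have : 0 ≤ (K + 1) * A * B := by positivity
          linarith
        · push_neg at hc
          have hApos : 0 < A := Esym_pos hfs (by omega)
          have hBpos : 0 < B := Esym_pos hfs (by omega)
          have hX : (0 : ℝ) < (K + 2) * (A * B) := by positivity
          have h3 := mul_le_mul hT0nn' h2' (by positivity) (by positivity)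
          rw [← mul_le_mul_iff_of_pos_right hX]
          calc (K + 3) * C * D * ((K + 2) * (A * B))
              = ((K + 3) * A * C) * ((K + 2) * D * B) := by ring
            _ ≤ ((K + 2) * B ^ 2) * ((K + 1) * A ^ 2) := h3
            _ = (K + 1) * A * B * ((K + 2) * (A * B)) := by ring
      -- strict leading term
      have hT0 : (K + 3) * A * C < (K + 2) * B ^ 2 := by
        by_cases hc : k' + 3 ≤ s.card
        · have := ih hfs (k' + 1) hc
          simp only [show k' + 1 + 1 = k' + 2 from rfl,
            show k' + 1 + 2 = k' + 3 from rfl] at this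
          push_cast at this
          linarith [this]
        · push_neg at hc
          have hC0 : C = 0 := Esym_eq_zero hc f
          have hBpos : 0 < B := Esym_pos hfs (by omega)
          rw [hC0]
          nlinarith [hBpos, hAn]
      nlinarith [hT0, mul_le_mul_of_nonneg_left hT1 hy.le,
        mul_le_mul_of_nonneg_left hT2 (sq_nonneg y)]

end Aux

lemma esym_eq_Esym {n : ℕ} (k : ℕ) (x : Fin n → ℝ) :
    esym k x = Esym Finset.univ k x := rfl

/-- Monotonicity of the k-DPP expectation: for a vector `x` of `n` positive reals and
`0 ≤ k ≤ n − 1`, with `D_k(x) := e₁(x) − (k+1) e_{k+1}(x)/e_k(x)`, one has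
`D_k(x) < D_{k+1}(x)`. -/
theorem stmt_7 (n : ℕ) (x : Fin n → ℝ) (hx : ∀ i, 0 < x i)
    (k : ℕ) (hk : k + 1 ≤ n) :
    esym 1 x - (k + 1) * esym (k + 1) x / esym k x
      < esym 1 x - (k + 2) * esym (k + 2) x / esym (k + 1) x := by
  have hcard : (Finset.univ : Finset (Fin n)).card = n := Finset.card_univ.trans (by simp)
  have hx' : ∀ i ∈ (Finset.univ : Finset (Fin n)), 0 < x i := fun i _ => hx i
  have hek : 0 < esym k x := by
    rw [esym_eq_Esym]; exact Esym_pos hx' (by omega)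
  have hek1 : 0 < esym (k + 1) x := by
    rw [esym_eq_Esym]; exact Esym_pos hx' (by omega)
  have hmain : ((k : ℝ) + 2) * esym (k + 2) x * esym k x
      < ((k : ℝ) + 1) * esym (k + 1) x * esym (k + 1) x := by
    by_cases hc : k + 2 ≤ n
    · have := newton_pos x Finset.univ hx' k (by omega)
      rw [← esym_eq_Esym, ← esym_eq_Esym, ← esym_eq_Esym] at this
      nlinarith [this]
    · have h0 : esym (k + 2) x = 0 := by
        rw [esym_eq_Esym]; exact Esym_eq_zero (by omega) x
      rw [h0]
      have : (0:ℝ) < ((k : ℝ) + 1) * esym (k + 1) x * esym (k + 1) x := by positivity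
      linarith
  have hdiv : ((k : ℝ) + 2) * esym (k + 2) x / esym (k + 1) x
      < ((k : ℝ) + 1) * esym (k + 1) x / esym k x := by
    rw [div_lt_div_iff₀ hek1 hek]
    nlinarith [hmain]
  linarith [hdiv]
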